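/- n-Shapley Values from the Shapley-GAM: for every value function v, every x ∈ ℝ^d, every 1 ≤ n ≤ d and every nonempty S ⊆ [d] with |S| ≤ n, Φ^n_S(x) = f_S(x) + ∑_{K ⊆ [d]∖S with |S|+|K| ≥ n+1} c_{n−|S|,|K|} · f_{S∪K}(x), where the coefficients are c_{j,m} = ∑_{k=0}^{j} binom(m,k) · B_k/(1+m−k) and f_T(x) = ∑_{L ⊆ T} (−1)^{|T|−|L|} · v(x, L) are the Shapley-GAM component functions of v. -/
import Mathlib


open Finset

/-- The measure of contribution `Δ_S(x)` associated with a value function `v` on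
`d` features: `Δ_S(x) = ∑_{T ⊆ [d]∖S} ((d-|T|-|S|)!·|T|!/(d-|S|+1)!) ·
∑_{L ⊆ S} (-1)^{|S|-|L|} · v(x, L ∪ T)`. -/
noncomputable def deltaContribution (d : ℕ) (v : (Fin d → ℝ) → Finset (Fin d) → ℝ)
    (x : Fin d → ℝ) (S : Finset (Fin d)) : ℝ :=
  ∑ T ∈ Sᶜ.powerset,
    (((d - T.card - S.card).factorial * T.card.factorial : ℕ) : ℝ) /
        (((d - S.card + 1).factorial : ℕ) : ℝ) *
      ∑ L ∈ S.powerset, (-1 : ℝ) ^ (S.card - L.card) * v x (L ∪ T)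

/-- The `n`-Shapley Value of a subset `S` at a point `x`, for a value function `v`:
`Φ^n_S(x) = ∑_{k=0}^{n-|S|} ∑_{K ⊆ [d]∖S, |K| = k} B_k · Δ_{S∪K}(x)`, where `B_k`
are the Bernoulli numbers with `B₁ = -1/2`. -/
noncomputable def nShapley (d : ℕ) (v : (Fin d → ℝ) → Finset (Fin d) → ℝ)
    (n : ℕ) (x : Fin d → ℝ) (S : Finset (Fin d)) : ℝ :=
  ∑ k ∈ Finset.range (n - S.card + 1),
    ∑ K ∈ Sᶜ.powerset.filter (fun K => K.card = k),
      (bernoulli k : ℝ) * deltaContribution d v x (S ∪ K)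


section Aux
variable {α : Type*} [DecidableEq α]

/-- Möbius transform of a set function. -/
noncomputable def mob (v : Finset α → ℝ) (A : Finset α) : ℝ :=
  ∑ L ∈ A.powerset, (-1 : ℝ) ^ (A.card - L.card) * v L



lemma mob_insert (v : Finset α → ℝ) {a : α} {B : Finset α} (ha : a ∉ B) :
    mob v (insert a B) = mob (fun L => v (insert a L) - v L) B := by
  unfold mob
  rw [sum_powerset_insert ha]
  have hcard : (insert a B).card = B.card + 1 := card_insert_of_notMem ha
  have h1 : ∀ L ∈ B.powerset, (-1:ℝ) ^ ((insert a B).card - L.card) * v L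
      = -((-1:ℝ) ^ (B.card - L.card) * v L) := by
    intro L hL
    rw [mem_powerset] at hL
    have hl : L.card ≤ B.card := card_le_card hL
    rw [hcard, show B.card + 1 - L.card = (B.card - L.card) + 1 by omega, pow_succ]
    ring
  have h2 : ∀ L ∈ B.powerset, (-1:ℝ) ^ ((insert a B).card - (insert a L).card) * v (insert a L)
      = (-1:ℝ) ^ (B.card - L.card) * v (insert a L) := by
    intro L hL
    rw [mem_powerset] at hL
    have haL : a ∉ L := fun h => ha (hL h)
    rw [hcard, card_insert_of_notMem haL]
    have hl : L.card ≤ B.card := card_le_card hL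
    congr 2
    omega
  rw [sum_congr rfl h1, sum_congr rfl h2]
  rw [← sum_add_distrib]
  congr 1; ext L; ring

lemma innerAltSum (v : Finset α → ℝ) (S T : Finset α) (hST : Disjoint S T) :
    ∑ L ∈ S.powerset, (-1 : ℝ) ^ (S.card - L.card) * v (L ∪ T)
      = ∑ U ∈ T.powerset, mob v (S ∪ U) := by
  classical
  induction T using Finset.induction generalizing v with
  | empty => simp [mob]
  | @insert a T' ha ih =>
    have hST' : Disjoint S T' := hST.mono_right (subset_insert a T')
    have haS : a ∉ S := fun h => (disjoint_left.mp hST) h (mem_insert_self a T')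
    rw [sum_powerset_insert ha]
    have e1 : ∑ U ∈ T'.powerset, mob v (S ∪ insert a U)
        = ∑ U ∈ T'.powerset, mob (fun L => v (insert a L) - v L) (S ∪ U) := by
      refine sum_congr rfl fun U hU => ?_
      rw [mem_powerset] at hU
      have : S ∪ insert a U = insert a (S ∪ U) := by
        ext y; simp [mem_insert, mem_union] <;> tauto
      rw [this, mob_insert]
      simp only [mem_union, not_or]
      exact ⟨haS, fun h => ha (hU h)⟩
    rw [e1, ← ih v hST', ← ih (fun L => v (insert a L) - v L) hST', ← sum_add_distrib]
    refine sum_congr rfl fun L hL => ?_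
    rw [mem_powerset] at hL
    have : L ∪ insert a T' = insert a (L ∪ T') := by
      ext y; simp [mem_insert, mem_union] <;> tauto
    rw [this]
    ring


lemma key_nat (u r j : ℕ) (hj : j ≤ r) :
    r.choose j * ((r - j).factorial * (u + j).factorial)
      = r.factorial * u.factorial * (u + j).choose j := by
  have hju : j ≤ u + j := Nat.le_add_left j u
  apply Nat.eq_of_mul_eq_mul_right (Nat.factorial_pos j)
  have h1 : r.choose j * j.factorial * (r - j).factorial = r.factorial :=
    Nat.choose_mul_factorial_mul_factorial hj
  have h2 : (u + j).choose j * j.factorial * ((u + j) - j).factorial = (u + j).factorial :=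
    Nat.choose_mul_factorial_mul_factorial hju
  have h3 : (u + j) - j = u := by omega
  rw [h3] at h2
  calc r.choose j * ((r - j).factorial * (u + j).factorial) * j.factorial
      = (r.choose j * j.factorial * (r - j).factorial) * (u + j).factorial := by ring
    _ = r.factorial * (u + j).factorial := by rw [h1]
    _ = r.factorial * ((u + j).choose j * j.factorial * u.factorial) := by rw [h2]
    _ = r.factorial * u.factorial * (u + j).choose j * j.factorial := by ring

lemma hockey (u r : ℕ) : ∑ j ∈ Finset.range (r + 1), (u + j).choose j
    = (u + r + 1).choose (u + 1) := by
  have h : ∀ j, (u + j).choose j = (j + u).choose u := by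
    intro j
    have := Nat.choose_symm (n := u + j) (k := u) (Nat.le_add_right u j)
    rw [show u + j - u = j by omega] at this
    rw [add_comm j u, this]
  simp_rw [h]
  rw [Nat.sum_range_add_choose r u, show r + u + 1 = u + r + 1 by omega]

lemma numer_sum (u r : ℕ) :
    ∑ j ∈ Finset.range (r + 1), r.choose j * ((r - j).factorial * (u + j).factorial)
      = r.factorial * u.factorial * (u + r + 1).choose (u + 1) := by
  rw [← hockey u r, Finset.mul_sum]
  refine Finset.sum_congr rfl fun j hj => ?_
  rw [Finset.mem_range] at hj
  exact key_nat u r j (by omega)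

variable {α : Type*} [DecidableEq α]

lemma weight_sum (A U : Finset α) (hU : U ⊆ A) :
    ∑ T ∈ A.powerset.filter (fun T => U ⊆ T),
      (((A.card - T.card).factorial * T.card.factorial : ℕ) : ℝ) /
        (((A.card + 1).factorial : ℕ) : ℝ)
      = 1 / ((U.card : ℝ) + 1) := by
  set m := A.card with hm
  set u := U.card with hu
  have hum : u ≤ m := card_le_card hU
  set r := m - u with hr
  -- rewrite the index set as an image
  have himg : A.powerset.filter (fun T => U ⊆ T)
      = (A \ U).powerset.image (fun V => U ∪ V) := by
    ext T
    simp only [mem_image, mem_powerset, mem_filter]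
    constructor
    · rintro ⟨hTA, hUT⟩
      exact ⟨T \ U, sdiff_subset_sdiff hTA Subset.rfl, union_sdiff_of_subset hUT⟩
    · rintro ⟨V, hV, rfl⟩
      exact ⟨union_subset hU (hV.trans (sdiff_subset)), subset_union_left⟩
  have hinj : ∀ V₁ ∈ (A \ U).powerset, ∀ V₂ ∈ (A \ U).powerset,
      U ∪ V₁ = U ∪ V₂ → V₁ = V₂ := by
    intro V₁ h₁ V₂ h₂ h
    rw [mem_powerset] at h₁ h₂
    have d₁ : Disjoint U V₁ := (disjoint_sdiff).mono_right h₁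
    have d₂ : Disjoint U V₂ := (disjoint_sdiff).mono_right h₂
    rw [← union_sdiff_cancel_left d₁, ← union_sdiff_cancel_left d₂, h]
  rw [himg, sum_image hinj]
  have hcardAU : (A \ U).card = r := by rw [card_sdiff_of_subset hU]
  have hterm : ∀ V ∈ (A \ U).powerset,
      (((m - (U ∪ V).card).factorial * (U ∪ V).card.factorial : ℕ) : ℝ) /
        (((m + 1).factorial : ℕ) : ℝ)
      = (((m - (u + V.card)).factorial * (u + V.card).factorial : ℕ) : ℝ) /
        (((m + 1).factorial : ℕ) : ℝ) := by
    intro V hV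
    rw [mem_powerset] at hV
    have d : Disjoint U V := (disjoint_sdiff).mono_right hV
    rw [card_union_of_disjoint d]
  rw [sum_congr rfl hterm, Finset.sum_powerset, hcardAU]
  have hinner : ∀ j ∈ Finset.range (r + 1),
      ∑ V ∈ powersetCard j (A \ U),
        (((m - (u + V.card)).factorial * (u + V.card).factorial : ℕ) : ℝ) /
          (((m + 1).factorial : ℕ) : ℝ)
      = ((r.choose j * ((r - j).factorial * (u + j).factorial) : ℕ) : ℝ) /
          (((m + 1).factorial : ℕ) : ℝ) := by
    intro j hj
    rw [Finset.mem_range] at hj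
    have : ∀ V ∈ powersetCard j (A \ U),
        (((m - (u + V.card)).factorial * (u + V.card).factorial : ℕ) : ℝ) /
          (((m + 1).factorial : ℕ) : ℝ)
        = (((r - j).factorial * (u + j).factorial : ℕ) : ℝ) /
          (((m + 1).factorial : ℕ) : ℝ) := by
      intro V hV
      rw [Finset.mem_powersetCard] at hV
      rw [hV.2, show m - (u + j) = r - j by omega]
    rw [sum_congr rfl this, sum_const, Finset.card_powersetCard, hcardAU,
      nsmul_eq_mul]
    push_cast
    ring
  rw [sum_congr rfl hinner, ← sum_div, ← Nat.cast_sum, numer_sum]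
  have hmain : (r.factorial * u.factorial * (u + r + 1).choose (u + 1)) * (u + 1)
      = (m + 1).factorial := by
    have h1 : (u + r + 1).choose (u + 1) * (u + 1).factorial * ((u + r + 1) - (u + 1)).factorial
        = (u + r + 1).factorial := Nat.choose_mul_factorial_mul_factorial (by omega)
    rw [show (u + r + 1) - (u + 1) = r by omega] at h1
    rw [show m + 1 = u + r + 1 by omega, ← h1, Nat.factorial_succ u]
    ring
  rw [div_eq_div_iff (by positivity) (by positivity)]
  rw [one_mul, show ((u : ℝ) + 1) = (((u + 1 : ℕ) : ℝ)) by push_cast; ring,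
    ← Nat.cast_mul, hmain]

end Aux

lemma delta_eq (d : ℕ) (v : (Fin d → ℝ) → Finset (Fin d) → ℝ) (x : Fin d → ℝ)
    (R : Finset (Fin d)) :
    deltaContribution d v x R
      = ∑ U ∈ Rᶜ.powerset, 1 / ((U.card : ℝ) + 1) * mob (v x) (R ∪ U) := by
  unfold deltaContribution
  have hdisj : ∀ T ∈ Rᶜ.powerset, Disjoint R T := by
    intro T hT
    rw [mem_powerset] at hT
    exact disjoint_right.mpr fun a ha => by
      have := hT ha; rw [mem_compl] at this; exact this
  have step1 : ∀ T ∈ Rᶜ.powerset,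
      (((d - T.card - R.card).factorial * T.card.factorial : ℕ) : ℝ) /
          (((d - R.card + 1).factorial : ℕ) : ℝ) *
        ∑ L ∈ R.powerset, (-1 : ℝ) ^ (R.card - L.card) * v x (L ∪ T)
      = ∑ U ∈ T.powerset,
        (((Rᶜ.card - T.card).factorial * T.card.factorial : ℕ) : ℝ) /
          (((Rᶜ.card + 1).factorial : ℕ) : ℝ) * mob (v x) (R ∪ U) := by
    intro T hT
    rw [innerAltSum (v x) R T (hdisj T hT), Finset.mul_sum]
    have hc : Rᶜ.card = d - R.card := by
      rw [card_compl, Fintype.card_fin]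
    rw [hc, show d - T.card - R.card = d - R.card - T.card by omega]
  rw [sum_congr rfl step1]
  rw [Finset.sum_comm' (t' := Rᶜ.powerset)
    (s' := fun U => Rᶜ.powerset.filter (fun T => U ⊆ T)) (by
      intro T U
      simp only [mem_powerset, mem_filter, mem_powerset]
      constructor
      · rintro ⟨h1, h2⟩; exact ⟨⟨h1, h2⟩, h2.trans h1⟩
      · rintro ⟨⟨h1, h2⟩, _⟩; exact ⟨h1, h2⟩)]
  refine sum_congr rfl fun U hU => ?_
  rw [mem_powerset] at hU
  rw [← sum_mul, weight_sum Rᶜ U hU]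

lemma sum_union_powerset_sdiff {α : Type*} [DecidableEq α] (A K : Finset α) (hK : K ⊆ A)
    (g : Finset α → ℝ) :
    ∑ U ∈ (A \ K).powerset, g (K ∪ U)
      = ∑ W ∈ A.powerset.filter (fun W => K ⊆ W), g W := by
  have himg : A.powerset.filter (fun T => K ⊆ T)
      = (A \ K).powerset.image (fun V => K ∪ V) := by
    ext T
    simp only [mem_image, mem_powerset, mem_filter]
    constructor
    · rintro ⟨hTA, hKT⟩
      exact ⟨T \ K, sdiff_subset_sdiff hTA Subset.rfl, union_sdiff_of_subset hKT⟩
    · rintro ⟨V, hV, rfl⟩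
      exact ⟨union_subset hK (hV.trans sdiff_subset), subset_union_left⟩
  have hinj : ∀ V₁ ∈ (A \ K).powerset, ∀ V₂ ∈ (A \ K).powerset,
      K ∪ V₁ = K ∪ V₂ → V₁ = V₂ := by
    intro V₁ h₁ V₂ h₂ h
    rw [mem_powerset] at h₁ h₂
    have d₁ : Disjoint K V₁ := disjoint_sdiff.mono_right h₁
    have d₂ : Disjoint K V₂ := disjoint_sdiff.mono_right h₂
    rw [← union_sdiff_cancel_left d₁, ← union_sdiff_cancel_left d₂, h]
  rw [himg, sum_image hinj]

lemma nShapley_eq (d : ℕ) (v : (Fin d → ℝ) → Finset (Fin d) → ℝ) (n : ℕ)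
    (x : Fin d → ℝ) (S : Finset (Fin d)) :
    nShapley d v n x S
      = ∑ W ∈ Sᶜ.powerset,
          (∑ k ∈ Finset.range (n - S.card + 1),
            (W.card.choose k : ℝ) * (bernoulli k : ℝ) / (1 + (W.card : ℝ) - (k : ℝ)))
            * mob (v x) (S ∪ W) := by
  unfold nShapley
  have stepA : ∀ k ∈ Finset.range (n - S.card + 1),
      ∑ K ∈ Sᶜ.powerset.filter (fun K => K.card = k),
        (bernoulli k : ℝ) * deltaContribution d v x (S ∪ K)
      = ∑ K ∈ Sᶜ.powerset.filter (fun K => K.card = k),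
          ∑ W ∈ Sᶜ.powerset.filter (fun W => K ⊆ W),
            (bernoulli k : ℝ) * (1 / (((W.card - k : ℕ) : ℝ) + 1)) * mob (v x) (S ∪ W) := by
    intro k _
    refine sum_congr rfl fun K hK => ?_
    rw [mem_filter, mem_powerset] at hK
    obtain ⟨hKS, hKk⟩ := hK
    have hcompl : (S ∪ K)ᶜ = Sᶜ \ K := by rw [compl_union, sdiff_eq]; rfl
    rw [delta_eq, hcompl, Finset.mul_sum]
    rw [← sum_union_powerset_sdiff Sᶜ K hKS
      (fun W => (bernoulli k : ℝ) * (1 / (((W.card - k : ℕ) : ℝ) + 1)) * mob (v x) (S ∪ W))]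
    refine sum_congr rfl fun U hU => ?_
    rw [mem_powerset] at hU
    have hd : Disjoint K U := disjoint_sdiff.mono_right hU
    have hcard : (K ∪ U).card = k + U.card := by
      rw [card_union_of_disjoint hd, hKk]
    have h1 : (K ∪ U).card - k = U.card := by omega
    have h2 : S ∪ K ∪ U = S ∪ (K ∪ U) := union_assoc S K U
    rw [h1, h2]
    ring
  rw [sum_congr rfl stepA]
  have stepB : ∀ k ∈ Finset.range (n - S.card + 1),
      ∑ K ∈ Sᶜ.powerset.filter (fun K => K.card = k),
          ∑ W ∈ Sᶜ.powerset.filter (fun W => K ⊆ W),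
            (bernoulli k : ℝ) * (1 / (((W.card - k : ℕ) : ℝ) + 1)) * mob (v x) (S ∪ W)
      = ∑ W ∈ Sᶜ.powerset,
          (W.card.choose k : ℝ) *
            ((bernoulli k : ℝ) * (1 / (((W.card - k : ℕ) : ℝ) + 1)) * mob (v x) (S ∪ W)) := by
    intro k _
    rw [Finset.sum_comm' (t' := Sᶜ.powerset)
      (s' := fun W => (Sᶜ.powerset.filter (fun K => K.card = k)).filter (fun K => K ⊆ W)) (by
        intro K W
        simp only [mem_filter, mem_powerset]
        tauto)]
    refine sum_congr rfl fun W hW => ?_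
    rw [mem_powerset] at hW
    have hset : (Sᶜ.powerset.filter (fun K => K.card = k)).filter (fun K => K ⊆ W)
        = W.powersetCard k := by
      ext K
      simp only [mem_filter, mem_powerset, Finset.mem_powersetCard]
      constructor
      · rintro ⟨⟨_, h2⟩, h3⟩; exact ⟨h3, h2⟩
      · rintro ⟨h1, h2⟩; exact ⟨⟨h1.trans hW, h2⟩, h1⟩
    rw [hset, sum_const, Finset.card_powersetCard, nsmul_eq_mul]
  rw [sum_congr rfl stepB, Finset.sum_comm]
  refine sum_congr rfl fun W hW => ?_
  rw [Finset.sum_mul]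
  refine sum_congr rfl fun k _ => ?_
  by_cases hkw : k ≤ W.card
  · rw [show ((W.card - k : ℕ) : ℝ) + 1 = 1 + (W.card : ℝ) - (k : ℝ) by
      push_cast [Nat.cast_sub hkw]; ring]
    ring
  · rw [Nat.choose_eq_zero_of_lt (by omega)]
    simp


lemma c_small (j w : ℕ) (hw : w ≤ j) :
    ∑ k ∈ Finset.range (j + 1),
        (w.choose k : ℝ) * (bernoulli k : ℝ) / (1 + (w : ℝ) - (k : ℝ))
      = if w = 0 then 1 else 0 := by
  have hsub : Finset.range (w + 1) ⊆ Finset.range (j + 1) :=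
    Finset.range_subset_range.mpr (by omega)
  rw [← Finset.sum_subset hsub (by
    intro k hk hk'
    rw [Finset.mem_range] at hk hk'
    rw [Nat.choose_eq_zero_of_lt (by omega)]
    simp)]
  have hterm : ∀ k ∈ Finset.range (w + 1),
      (w.choose k : ℝ) * (bernoulli k : ℝ) / (1 + (w : ℝ) - (k : ℝ))
      = (((w + 1).choose k : ℝ) * (bernoulli k : ℝ)) / ((w : ℝ) + 1) := by
    intro k hk
    rw [Finset.mem_range] at hk
    have hkw : k ≤ w := by omega
    have hmul := Nat.choose_mul_succ_eq w k
    have hcast : (w.choose k : ℝ) * ((w : ℝ) + 1)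
        = ((w + 1).choose k : ℝ) * (1 + (w : ℝ) - (k : ℝ)) := by
      have : ((w.choose k * (w + 1) : ℕ) : ℝ) = (((w + 1).choose k * (w + 1 - k) : ℕ) : ℝ) := by
        exact_mod_cast congrArg Nat.cast hmul
      push_cast [Nat.cast_sub (by omega : k ≤ w + 1)] at this
      rw [this]; ring
    have hne : (1 : ℝ) + (w : ℝ) - (k : ℝ) ≠ 0 := by
      have : (k : ℝ) ≤ (w : ℝ) := by exact_mod_cast hkw
      linarith
    have hne2 : (w : ℝ) + 1 ≠ 0 := by positivity
    rw [div_eq_div_iff hne (by positivity)]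
    linear_combination (bernoulli k : ℝ) * hcast
  rw [Finset.sum_congr rfl hterm, ← Finset.sum_div]
  have hq := sum_bernoulli (w + 1)
  have hr : ∑ k ∈ Finset.range (w + 1), ((w + 1).choose k : ℝ) * (bernoulli k : ℝ)
      = if w = 0 then 1 else 0 := by
    have := congrArg (fun q : ℚ => (q : ℝ)) hq
    push_cast [apply_ite (fun q : ℚ => (q : ℝ))] at this
    exact this
  rw [hr]
  by_cases h : w = 0
  · subst h; norm_num
  · simp [h]


/-- `n`-Shapley Values from the Shapley-GAM: with Shapley-GAM component functions
`f_T(x) = ∑_{L ⊆ T} (-1)^{|T|-|L|} · v(x, L)` and coefficients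
`c_{j,m} = ∑_{k=0}^{j} binom(m,k) · B_k/(1+m-k)`, we have
`Φ^n_S(x) = f_S(x) + ∑_{K ⊆ [d]∖S, |S|+|K| ≥ n+1} c_{n-|S|,|K|} · f_{S∪K}(x)`. -/
theorem nShapley_from_shapley_gam (d : ℕ) (hd : 1 ≤ d)
    (v : (Fin d → ℝ) → Finset (Fin d) → ℝ) (x : Fin d → ℝ)
    (n : ℕ) (hn : 1 ≤ n) (hnd : n ≤ d)
    (S : Finset (Fin d)) (hS : S.Nonempty) (hSn : S.card ≤ n)
    (f : Finset (Fin d) → ℝ)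
    (hf : ∀ T : Finset (Fin d),
      f T = ∑ L ∈ T.powerset, (-1 : ℝ) ^ (T.card - L.card) * v x L)
    (c : ℕ → ℕ → ℝ)
    (hc : ∀ j m : ℕ,
      c j m = ∑ k ∈ Finset.range (j + 1),
        (m.choose k : ℝ) * (bernoulli k : ℝ) / (1 + (m : ℝ) - (k : ℝ))) :
    nShapley d v n x S =
      f S + ∑ K ∈ Sᶜ.powerset.filter (fun K => n + 1 ≤ S.card + K.card),
        c (n - S.card) K.card * f (S ∪ K) := by
  have hmobf : ∀ T : Finset (Fin d), f T = mob (v x) T := fun T => by rw [hf T]; rfl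
  rw [nShapley_eq]
  have hcoef : ∀ W ∈ Sᶜ.powerset,
      (∑ k ∈ Finset.range (n - S.card + 1),
          (W.card.choose k : ℝ) * (bernoulli k : ℝ) / (1 + (W.card : ℝ) - (k : ℝ)))
        * mob (v x) (S ∪ W)
      = c (n - S.card) W.card * f (S ∪ W) := by
    intro W _
    rw [hc, hmobf]
  rw [sum_congr rfl hcoef,
    ← Finset.sum_filter_add_sum_filter_not Sᶜ.powerset (fun K => n + 1 ≤ S.card + K.card)]
  have hsmall : ∑ W ∈ Sᶜ.powerset.filter (fun K => ¬ (n + 1 ≤ S.card + K.card)),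
      c (n - S.card) W.card * f (S ∪ W) = f S := by
    have hmem : (∅ : Finset (Fin d)) ∈
        Sᶜ.powerset.filter (fun K => ¬ (n + 1 ≤ S.card + K.card)) := by
      rw [mem_filter]
      refine ⟨empty_mem_powerset _, ?_⟩
      simp only [card_empty]
      omega
    rw [Finset.sum_eq_single_of_mem ∅ hmem (by
      intro W hW hWne
      rw [mem_filter] at hW
      have hcard : W.card ≤ n - S.card := by omega
      have : c (n - S.card) W.card = 0 := by
        rw [hc, c_small _ _ hcard, if_neg (by
          intro h
          exact hWne (card_eq_zero.mp h))]
      rw [this, zero_mul])]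
    have h0 : c (n - S.card) (∅ : Finset (Fin d)).card = 1 := by
      rw [card_empty, hc, c_small _ _ (Nat.zero_le _), if_pos rfl]
    rw [h0, union_empty, one_mul]
  rw [hsmall]
  ring
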